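/- arXiv:2210.15249 — 2 statements merged into one kernel-verified Lean document; each statement's English description precedes it below -/
import Mathlib

section
/- Let X be a graph in which every edge lies on a triangle, and let x be a vertex of X with a vertex at distance 2 from it. Then (x,1) is at distance 3 from (x,0) in BX, and every vertex of BX at distance 3 from (x,0) lies in {(x,1)} ∪ X₂(x)×{1} ∪ X₃(x)×{1}. -/
open SimpleGraph

/-- The canonical double cover `BX = X × K₂` of a graph `X`:
vertex set `V × Bool`, with `(x,i)` adjacent to `(y,j)` iff `x ~ y` in `X` and `i ≠ j`. -/
def doubleCover {V : Type*} (X : SimpleGraph V) : SimpleGraph (V × Bool) where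
  Adj p q := X.Adj p.1 q.1 ∧ p.2 ≠ q.2
  symm := ⟨fun p q h => ⟨X.adj_symm h.1, Ne.symm h.2⟩⟩
  loopless := ⟨fun p h => h.2 rfl⟩

/-- An automorphism of `BX` is *expected* if it lies in the subgroup generated by the
lifts of automorphisms of `X` and the coordinate swap `τ`, i.e. it has the form
`(x,i) ↦ (φ x, i + b)` for some automorphism `φ` of `X` and some `b`. -/
def IsExpected {V : Type*} (X : SimpleGraph V) (α : doubleCover X ≃g doubleCover X) : Prop :=
  ∃ (φ : X ≃g X) (b : Bool), ∀ p : V × Bool, α p = (φ p.1, xor p.2 b)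

/-- A graph is *stable* if every automorphism of its canonical double cover is expected. -/
def IsStable {V : Type*} (X : SimpleGraph V) : Prop :=
  ∀ α : doubleCover X ≃g doubleCover X, IsExpected X α

/-- A graph is *twin-free* if distinct vertices have distinct neighbourhoods. -/
def TwinFree {V : Type*} (X : SimpleGraph V) : Prop :=
  ∀ u v : V, X.neighborSet u = X.neighborSet v → u = v

/-- Projection of the double cover onto the base graph. -/
def dcFst {V : Type*} (X : SimpleGraph V) : doubleCover X →g X where
  toFun := Prod.fst
  map_rel' := fun h => h.1

lemma dc_adj {V : Type*} {X : SimpleGraph V} {u v : V} {i j : Bool}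
    (h : X.Adj u v) (hij : i ≠ j) : (doubleCover X).Adj (u, i) (v, j) := ⟨h, hij⟩

lemma dc_parity {V : Type*} (X : SimpleGraph V) {a b : V × Bool}
    (w : (doubleCover X).Walk a b) : (a.2 = b.2) ↔ Even w.length := by
  induction w with
  | nil => simp
  | cons h w ih =>
    rename_i u c d
    have h2 : u.2 ≠ c.2 := h.2
    rw [Walk.length_cons, Nat.even_add_one, ← ih]
    rcases u with ⟨u1, u2⟩; rcases c with ⟨c1, c2⟩; rcases d with ⟨d1, d2⟩
    cases u2 <;> cases c2 <;> cases d2 <;> simp_all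

theorem doubleCover_sphere_three {V : Type*} [Fintype V] (X : SimpleGraph V)
    (htri : ∀ u v : V, X.Adj u v → ∃ w : V, X.Adj u w ∧ X.Adj v w) (x : V)
    (h2 : ∃ z : V, X.dist x z = 2) :
    (doubleCover X).dist (x, false) (x, true) = 3 ∧
      ∀ p : V × Bool, (doubleCover X).dist (x, false) p = 3 →
        p = (x, true) ∨ (p.2 = true ∧ (X.dist x p.1 = 2 ∨ X.dist x p.1 = 3)) := by
  obtain ⟨z, hz⟩ := h2
  obtain ⟨wz, hwz⟩ := SimpleGraph.exists_walk_of_dist_ne_zero (by omega : X.dist x z ≠ 0)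
  have hy : ∃ y, X.Adj x y := by
    cases wz with
    | nil => simp at hz
    | cons h _ => exact ⟨_, h⟩
  obtain ⟨y, hxy⟩ := hy
  obtain ⟨w, hxw, hyw⟩ := htri x y hxy
  have hle3 : (doubleCover X).dist (x, false) (x, true) ≤ 3 := by
    have hdl := SimpleGraph.dist_le
      (Walk.cons (dc_adj (i := false) (j := true) hxy (by decide))
        (Walk.cons (dc_adj (i := true) (j := false) hyw (by decide))
          (Walk.cons (dc_adj (i := false) (j := true) (X.adj_symm hxw) (by decide)) Walk.nil)))
    simpa using hdl
  have hreach : (doubleCover X).Reachable (x, false) (x, true) :=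
    ⟨Walk.cons (dc_adj (i := false) (j := true) hxy (by decide))
      (Walk.cons (dc_adj (i := true) (j := false) hyw (by decide))
        (Walk.cons (dc_adj (i := false) (j := true) (X.adj_symm hxw) (by decide)) Walk.nil))⟩
  obtain ⟨Wd, hWd⟩ := hreach.exists_walk_length_eq_dist
  have hodd : ¬ Even ((doubleCover X).dist (x, false) (x, true)) := by
    rw [← hWd]
    intro he
    exact absurd ((dc_parity X Wd).mpr he) (by simp)
  have hne1 : (doubleCover X).dist (x, false) (x, true) ≠ 1 := by
    intro h1
    have hadj : (doubleCover X).Adj (x, false) (x, true) := by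
      rwa [← SimpleGraph.dist_eq_one_iff_adj]
    exact X.irrefl hadj.1
  have hd3 : (doubleCover X).dist (x, false) (x, true) = 3 := by
    rcases Nat.even_or_odd ((doubleCover X).dist (x, false) (x, true)) with h | h
    · exact absurd h hodd
    · obtain ⟨k, hk⟩ := h; omega
  refine ⟨hd3, fun p hp => ?_⟩
  obtain ⟨Wp, hWp⟩ := SimpleGraph.exists_walk_of_dist_ne_zero
    (by omega : (doubleCover X).dist (x, false) p ≠ 0)
  rw [hp] at hWp
  have hpt : p.2 = true := by
    have hne : ((x, false).2 = p.2) ↔ Even Wp.length := dc_parity X Wp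
    rw [hWp] at hne
    cases hb : p.2
    · exact absurd (hne.mp (by simp [hb])) (by decide)
    · rfl
  have hXle : X.dist x p.1 ≤ 3 := by
    have := SimpleGraph.dist_le (Wp.map (dcFst X))
    exact (by simpa [hWp] using this : X.dist ((dcFst X) (x, false)) ((dcFst X) p) ≤ 3)
  have hXreach : X.Reachable x p.1 := ⟨Wp.map (dcFst X)⟩
  have hcases : X.dist x p.1 = 0 ∨ X.dist x p.1 = 1 ∨ X.dist x p.1 = 2 ∨ X.dist x p.1 = 3 := by
    omega
  rcases hcases with h0 | h1 | h | h
  · left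
    have hx1 := hXreach.dist_eq_zero_iff.mp h0
    exact Prod.ext_iff.mpr ⟨hx1.symm, hpt⟩
  · exfalso
    have hadj := SimpleGraph.dist_eq_one_iff_adj.mp h1
    have hadj' : (doubleCover X).Adj (x, false) p := ⟨hadj, by simp [hpt]⟩
    have hd1 := SimpleGraph.dist_le (Walk.cons hadj' Walk.nil)
    rw [hp] at hd1
    simp at hd1
  · exact Or.inr ⟨hpt, Or.inl h⟩
  · exact Or.inr ⟨hpt, Or.inr h⟩
end

section
/- Let X be a triangle-free graph of diameter 2 and x a vertex of X. If X is non-bipartite, then there is a vertex z at distance 2 from x that has a neighbour at distance 2 from x; moreover, the vertex (x,1) of BX is at distance exactly 5 from (x,0), and every vertex of BX at distance 5 from (x,0) lies in {(x,1)} ∪ (X₂(x) ∖ S(x)) × {1}, where S(x) is the set of vertices at distance 2 from x having a neighbour at distance 2 from x. -/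
open SimpleGraph

/-- `Sset X x` is the set of vertices at distance 2 from `x` having a neighbour at
distance 2 from `x`. -/
def Sset {V : Type*} (X : SimpleGraph V) (x : V) : Set V :=
  {z | X.dist x z = 2 ∧ ∃ w, X.Adj z w ∧ X.dist x w = 2}

/-- projection homomorphism -/
def dcProj {V : Type*} (X : SimpleGraph V) : doubleCover X →g X :=
  ⟨Prod.fst, fun h => h.1⟩

lemma dc_parity_s16 {V : Type*} {X : SimpleGraph V} :
    ∀ {p q : V × Bool} (w : (doubleCover X).Walk p q), q.2 = xor p.2 w.length.bodd := by
  intro p q w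
  induction w with
  | nil => simp
  | @cons p r q h w ih =>
    have hr : r.2 = !p.2 := by
      rcases h with ⟨-, h2⟩
      cases hp : p.2 <;> cases hq : r.2 <;> simp_all
    rw [Walk.length_cons, Nat.bodd_succ, ih, hr]
    cases p.2 <;> cases w.length.bodd <;> rfl

lemma dc_lift {V : Type*} {X : SimpleGraph V} :
    ∀ {u v : V} (w : X.Walk u v) (b : Bool),
      ∃ w' : (doubleCover X).Walk (u, b) (v, xor b w.length.bodd), w'.length = w.length := by
  intro u v w
  induction w with
  | nil => intro b; exact ⟨Walk.nil.copy rfl (by simp), by rw [Walk.length_copy]; rfl⟩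
  | @cons u u' v h w ih =>
    intro b
    obtain ⟨w', hw'⟩ := ih (!b)
    refine ⟨(Walk.cons (show (doubleCover X).Adj (u, b) (u', !b) from ⟨h, by simp⟩) w').copy rfl ?_, by rw [Walk.length_copy, Walk.length_cons, hw', Walk.length_cons]⟩
    rw [Walk.length_cons, Nat.bodd_succ]
    cases b <;> cases w.length.bodd <;> rfl

theorem triangle_free_sphere_five {V : Type*} [Fintype V] (X : SimpleGraph V)
    (htfree : X.CliqueFree 3) (hdiam : X.diam = 2) (hnbip : ¬X.Colorable 2) (x : V) :
    (∃ z, z ∈ Sset X x) ∧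
    (doubleCover X).dist (x, false) (x, true) = 5 ∧
    ∀ p : V × Bool, (doubleCover X).dist (x, false) p = 5 →
      p = (x, true) ∨ (p.2 = true ∧ X.dist x p.1 = 2 ∧ p.1 ∉ Sset X x) := by
  classical
  have hediam : X.ediam ≠ ⊤ := ediam_ne_top_of_diam_ne_zero (by rw [hdiam]; norm_num)
  have hreach : ∀ u v : V, X.Reachable u v := by
    intro u v
    refine edist_ne_top_iff_reachable.mp (fun h => hediam ?_)
    exact top_le_iff.mp (h ▸ edist_le_ediam)
  have hdle : ∀ u v : V, X.dist u v ≤ 2 := fun u v => hdiam ▸ dist_le_diam hediam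
  have htri : ∀ a b c : V, X.Adj a b → X.Adj a c → X.Adj b c → False := by
    intro a b c h1 h2 h3
    exact htfree {a, b, c} (is3Clique_triple_iff.mpr ⟨h1, h2, h3⟩)
  -- Part 1
  have hS : ∃ z, z ∈ Sset X x := by
    by_contra hS
    push_neg at hS
    apply hnbip
    have C : X.Coloring Bool := Coloring.mk (fun v => decide (X.dist x v = 1)) ?_
    · simpa using C.colorable
    · intro u v huv hc
      simp only [decide_eq_decide] at hc
      by_cases hu1 : X.dist x u = 1
      · have hv1 : X.dist x v = 1 := hc.mp hu1
        exact htri x u v (dist_eq_one_iff_adj.mp hu1) (dist_eq_one_iff_adj.mp hv1) huv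
      · have hv1 : ¬ X.dist x v = 1 := fun h => hu1 (hc.mpr h)
        have hu0 : X.dist x u ≠ 0 := by
          intro h
          have : u = x := (((hreach x u).dist_eq_zero_iff).mp h).symm
          subst this
          exact hv1 (dist_eq_one_iff_adj.mpr huv)
        have hv0 : X.dist x v ≠ 0 := by
          intro h
          have : v = x := (((hreach x v).dist_eq_zero_iff).mp h).symm
          subst this
          exact hu1 (dist_eq_one_iff_adj.mpr huv.symm)
        have hu2 : X.dist x u = 2 := by have := hdle x u; omega
        have hv2 : X.dist x v = 2 := by have := hdle x v; omega
        exact hS u ⟨hu2, v, huv, hv2⟩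
  obtain ⟨z, hz2, w, hzw, hw2⟩ := hS
  -- a closed walk of length 5 at x
  obtain ⟨wxz, hwxz⟩ := (hreach x z).exists_walk_length_eq_dist
  obtain ⟨wxw, hwxw⟩ := (hreach x w).exists_walk_length_eq_dist
  rw [hz2] at hwxz
  rw [hw2] at hwxw
  set cyc : X.Walk x x := wxz.append (Walk.cons hzw wxw.reverse) with hcyc
  have hcl : cyc.length = 5 := by
    simp [hcyc, Walk.length_append, Walk.length_cons, Walk.length_reverse, hwxz, hwxw]
  obtain ⟨w5₀, hw5₀⟩ := dc_lift (X := X) cyc false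
  have hept : ((x, xor false cyc.length.bodd) : V × Bool) = (x, true) := by rw [hcl]; rfl
  set w5 := w5₀.copy rfl hept with hw5def
  have hw5 : w5.length = 5 := by rw [hw5def, Walk.length_copy, hw5₀, hcl]
  have hble : (doubleCover X).dist (x, false) (x, true) ≤ 5 := by
    have := dist_le w5
    omega
  have hreach5 : (doubleCover X).Reachable (x, false) (x, true) := ⟨w5⟩
  have hbge : (doubleCover X).dist (x, false) (x, true) = 5 := by
    obtain ⟨wd, hwd⟩ := hreach5.exists_walk_length_eq_dist
    have hpar : (true : Bool) = xor false wd.length.bodd := dc_parity_s16 wd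
    have hodd : wd.length.bodd = true := by simpa using hpar.symm
    have hodd' : wd.length % 2 = 1 := by
      rw [Nat.mod_two_of_bodd, hodd]; rfl
    have hne1 : wd.length ≠ 1 := by
      intro h1
      have : (doubleCover X).Adj (x, false) (x, true) := by
        rw [← dist_eq_one_iff_adj, ← hwd]; exact h1
      exact X.loopless.irrefl x this.1
    have hne3 : wd.length ≠ 3 := by
      intro h3
      obtain ⟨wX, hwX⟩ : ∃ wX : X.Walk x x, wX.length = 3 :=
        ⟨wd.map (dcProj X), by exact (Walk.length_map _ _).trans h3⟩
      -- destructure a closed walk of length 3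
      match wX, hwX with
      | Walk.cons h1 (Walk.cons h2 (Walk.cons h3 Walk.nil)), _ =>
        exact htri _ _ _ h1 h3.symm h2
    have := hwd ▸ dist_le wd
    have h5 := hble
    rw [← hwd]
    omega
  refine ⟨⟨z, hz2, w, hzw, hw2⟩, hbge, ?_⟩
  -- Part 3
  rintro ⟨y, j⟩ hp
  have hpr : (doubleCover X).Reachable (x, false) (y, j) :=
    Reachable.of_dist_ne_zero (by omega)
  obtain ⟨wd, hwd⟩ := hpr.exists_walk_length_eq_dist
  rw [hp] at hwd
  have hj : j = true := by
    have := dc_parity_s16 wd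
    rw [hwd] at this
    simpa using this
  subst hj
  have hxy := hdle x y
  have hcases : X.dist x y = 0 ∨ X.dist x y = 1 ∨ X.dist x y = 2 := by omega
  rcases hcases with h | h | h
  · left
    have : y = x := (((hreach x y).dist_eq_zero_iff).mp h).symm
    rw [this]
  · exfalso
    have hadj : X.Adj x y := dist_eq_one_iff_adj.mp h
    have hle1 := dist_le (Walk.cons (show (doubleCover X).Adj (x, false) (y, true) from
      ⟨hadj, by simp⟩) Walk.nil)
    simp only [Walk.length_cons, Walk.length_nil] at hle1
    omega
  · right
    refine ⟨rfl, h, ?_⟩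
    rintro ⟨-, w', hyw', hw'2⟩
    obtain ⟨wxw', hwxw'⟩ := (hreach x w').exists_walk_length_eq_dist
    rw [hw'2] at hwxw'
    set w3 : X.Walk x y := wxw'.append (Walk.cons hyw'.symm Walk.nil) with hw3
    have hl3 : w3.length = 3 := by
      simp [hw3, Walk.length_append, Walk.length_cons, hwxw']
    obtain ⟨wl₀, hwl₀⟩ := dc_lift (X := X) w3 false
    have hept3 : ((y, xor false w3.length.bodd) : V × Bool) = (y, true) := by rw [hl3]; rfl
    set wl := wl₀.copy rfl hept3 with hwldef
    have hwl : wl.length = 3 := by rw [hwldef, Walk.length_copy, hwl₀, hl3]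
    have := dist_le wl
    omega
end
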